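/- Let N be an odd positive integer, h = 1/(N+1), and let U_0, …, U_{N+1} be real numbers with U_0 = U_{N+1} = 0 satisfying the bi-grid condition U_{2j+1} = (U_{2j} + U_{2j+2})/2 for 0 ≤ j ≤ (N−1)/2. Then for every 1 ≤ k ≤ N: Σ_{j=1}^{N} U_j·sin(kπjh) = 2·cos²(kπh/2)·Σ_{j=1}^{(N−1)/2} U_{2j}·sin(2kπjh). In particular, for k = (N+1)/2 the sum Σ_{j=1}^{N} U_j·sin(kπjh) vanishes. -/

import Mathlib

open Real Finset

private lemma pair_sum_aux (f : ℕ → ℝ) : ∀ n : ℕ, ∑ j ∈ range (2*n+2), f j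
    = ∑ j ∈ range (n+1), (f (2*j) + f (2*j+1)) := by
  intro n
  induction n with
  | zero => simp [Finset.sum_range_succ]
  | succ n ih =>
      have e : 2*(n+1)+2 = (2*n+2)+1+1 := by ring
      rw [e, Finset.sum_range_succ, Finset.sum_range_succ, ih,
        Finset.sum_range_succ (fun j => f (2*j) + f (2*j+1)) (n+1)]
      rw [show 2*(n+1) = 2*n+2 from by omega, show 2*n+2+1 = 2*n+3 from by omega, add_assoc]

private lemma icc_sum_aux (f : ℕ → ℝ) (n : ℕ) :
    ∑ j ∈ range (n+1), f j = f 0 + ∑ j ∈ Icc 1 n, f j := by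
  rw [Finset.range_eq_Ico, Finset.sum_eq_sum_Ico_succ_bot (by omega), Finset.Ico_add_one_right_eq_Icc]

theorem stmt_13 (N : ℕ) (hodd : Odd N) (hN : 1 ≤ N) (h : ℝ)
    (hh : h = 1 / ((N : ℝ) + 1))
    (U : ℕ → ℝ) (hU0 : U 0 = 0) (hUN : U (N + 1) = 0)
    (hbigrid : ∀ j : ℕ, j ≤ (N - 1) / 2 →
      U (2 * j + 1) = (U (2 * j) + U (2 * j + 2)) / 2) :
    (∀ k : ℕ, 1 ≤ k → k ≤ N →
      ∑ j ∈ Finset.Icc 1 N, U j * Real.sin ((k : ℝ) * Real.pi * (j : ℝ) * h)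
        = 2 * Real.cos ((k : ℝ) * Real.pi * h / 2) ^ 2 *
            ∑ j ∈ Finset.Icc 1 ((N - 1) / 2),
              U (2 * j) * Real.sin (2 * (k : ℝ) * Real.pi * (j : ℝ) * h)) ∧
    ∑ j ∈ Finset.Icc 1 N,
        U j * Real.sin ((((N : ℝ) + 1) / 2) * Real.pi * (j : ℝ) * h) = 0 := by
  obtain ⟨m, rfl⟩ := hodd
  have hm : (2*m+1-1)/2 = m := by omega
  have hU2m2 : U (2*(m+1)) = 0 := by
    have : 2*(m+1) = 2*m+1+1 := by ring
    rw [this]; exact hUN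
  have Hmain : ∀ k : ℕ,
      ∑ j ∈ Finset.Icc 1 (2*m+1), U j * Real.sin ((k : ℝ) * Real.pi * (j : ℝ) * h)
        = 2 * Real.cos ((k : ℝ) * Real.pi * h / 2) ^ 2 *
            ∑ j ∈ Finset.Icc 1 m,
              U (2 * j) * Real.sin (2 * (k : ℝ) * Real.pi * (j : ℝ) * h) := by
    intro k
    -- step 1: Icc sum = range sum
    have I := icc_sum_aux (fun j => U j * Real.sin ((k : ℝ) * Real.pi * (j : ℝ) * h)) (2*m+1)
    rw [show 2*m+1+1 = 2*m+2 from by omega] at I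
    simp only [Nat.cast_zero, mul_zero, zero_mul, Real.sin_zero, hU0] at I
    -- step 2: pairing
    have P := pair_sum_aux (fun j => U j * Real.sin ((k : ℝ) * Real.pi * (j : ℝ) * h)) m
    -- step 3: bigrid rewrite + shift + trig, all termwise after handling the shift
    -- T j := U (2j) * sin (kπ(2j-1)h) / 2
    set T : ℕ → ℝ := fun j => U (2*j) * Real.sin ((k : ℝ) * Real.pi * (2*(j:ℝ)-1) * h) / 2 with hT
    have hT0 : T 0 = 0 := by simp [hT, hU0]
    have hTm1 : T (m+1) = 0 := by simp [hT, hU2m2]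
    have shift : ∑ j ∈ range (m+1), U (2*(j+1)) * Real.sin ((k : ℝ) * Real.pi * ((2*(j:ℝ)+1)) * h) / 2
        = ∑ j ∈ range (m+1), T j := by
      have S1 := Finset.sum_range_succ' T (m+1)
      have S2 := Finset.sum_range_succ T (m+1)
      have e : ∀ j : ℕ, T (j+1) = U (2*(j+1)) * Real.sin ((k : ℝ) * Real.pi * ((2*(j:ℝ)+1)) * h) / 2 := by
        intro j
        simp only [hT]
        push_cast
        ring_nf
      calc ∑ j ∈ range (m+1), U (2*(j+1)) * Real.sin ((k : ℝ) * Real.pi * ((2*(j:ℝ)+1)) * h) / 2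
          = ∑ j ∈ range (m+1), T (j+1) := by
            exact Finset.sum_congr rfl fun j _ => (e j).symm
        _ = ∑ j ∈ range (m+1+1), T j - T 0 := by rw [S1]; ring
        _ = ∑ j ∈ range (m+1), T j := by rw [S2, hT0, hTm1]; ring
    -- termwise trig identity
    have trig : ∀ j : ℕ,
        U (2*j) * Real.sin ((k : ℝ) * Real.pi * (2*(j:ℝ)) * h)
          + U (2*j) * Real.sin ((k : ℝ) * Real.pi * ((2*(j:ℝ)+1)) * h) / 2
          + T j
        = 2 * Real.cos ((k : ℝ) * Real.pi * h / 2) ^ 2 *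
            (U (2*j) * Real.sin (2 * (k : ℝ) * Real.pi * (j:ℝ) * h)) := by
      intro j
      have hA : (k : ℝ) * Real.pi * ((2*(j:ℝ)+1)) * h
          = (k : ℝ) * Real.pi * (2*(j:ℝ)) * h + (k : ℝ) * Real.pi * h := by ring
      have hB : (k : ℝ) * Real.pi * ((2*(j:ℝ)-1)) * h
          = (k : ℝ) * Real.pi * (2*(j:ℝ)) * h - (k : ℝ) * Real.pi * h := by ring
      have hC : 2 * (k : ℝ) * Real.pi * (j:ℝ) * h = (k : ℝ) * Real.pi * (2*(j:ℝ)) * h := by ring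
      have hcos : Real.cos ((k : ℝ) * Real.pi * h / 2) ^ 2
          = 1/2 + Real.cos ((k : ℝ) * Real.pi * h) / 2 := by
        have := Real.cos_sq ((k : ℝ) * Real.pi * h / 2)
        rw [show 2*((k : ℝ) * Real.pi * h / 2) = (k : ℝ) * Real.pi * h from by ring] at this
        exact this
      simp only [hT, hA, hB, hC, Real.sin_add, Real.sin_sub, hcos]
      ring
    -- assemble
    have main : ∑ j ∈ range (m+1),
        (U (2*j) * Real.sin ((k : ℝ) * Real.pi * ((2*j : ℕ) : ℝ) * h)
          + U (2*j+1) * Real.sin ((k : ℝ) * Real.pi * ((2*j+1 : ℕ) : ℝ) * h))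
        = ∑ j ∈ range (m+1),
            2 * Real.cos ((k : ℝ) * Real.pi * h / 2) ^ 2 *
              (U (2*j) * Real.sin (2 * (k : ℝ) * Real.pi * (j:ℝ) * h)) := by
      have hbg : ∀ j : ℕ, j ∈ range (m+1) →
          (U (2*j) * Real.sin ((k : ℝ) * Real.pi * ((2*j : ℕ) : ℝ) * h)
            + U (2*j+1) * Real.sin ((k : ℝ) * Real.pi * ((2*j+1 : ℕ) : ℝ) * h))
          = U (2*j) * Real.sin ((k : ℝ) * Real.pi * (2*(j:ℝ)) * h)
            + U (2*j) * Real.sin ((k : ℝ) * Real.pi * ((2*(j:ℝ)+1)) * h) / 2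
            + U (2*(j+1)) * Real.sin ((k : ℝ) * Real.pi * ((2*(j:ℝ)+1)) * h) / 2 := by
        intro j hj
        rw [Finset.mem_range] at hj
        have hb := hbigrid j (by omega)
        rw [hb]
        have e1 : ((2*j : ℕ) : ℝ) = 2*(j:ℝ) := by push_cast; ring
        have e2 : ((2*j+1 : ℕ) : ℝ) = 2*(j:ℝ)+1 := by push_cast; ring
        have e3 : 2*j+2 = 2*(j+1) := by ring
        rw [e1, e2, e3]
        ring
      rw [Finset.sum_congr rfl hbg, Finset.sum_add_distrib, shift,
        ← Finset.sum_add_distrib]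
      exact Finset.sum_congr rfl fun j _ => trig j
    -- put it together
    have final : ∑ j ∈ Finset.Icc 1 (2*m+1), U j * Real.sin ((k : ℝ) * Real.pi * (j : ℝ) * h)
        = ∑ j ∈ range (m+1),
            2 * Real.cos ((k : ℝ) * Real.pi * h / 2) ^ 2 *
              (U (2*j) * Real.sin (2 * (k : ℝ) * Real.pi * (j:ℝ) * h)) := by
      rw [← main, ← P]
      linarith [I]
    rw [final, ← Finset.mul_sum]
    congr 1
    rw [icc_sum_aux (fun j => U (2*j) * Real.sin (2 * (k : ℝ) * Real.pi * (j:ℝ) * h)) m]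
    simp [hU0]
  constructor
  · intro k _ _
    rw [hm]
    exact Hmain k
  · have hk : (((2*m+1 : ℕ) : ℝ) + 1) / 2 = ((m+1 : ℕ) : ℝ) := by push_cast; ring
    rw [hk, Hmain (m+1)]
    have hz : ∀ j ∈ Finset.Icc 1 m,
        U (2*j) * Real.sin (2 * ((m+1 : ℕ) : ℝ) * Real.pi * (j:ℝ) * h) = 0 := by
      intro j _
      have harg : 2 * ((m+1 : ℕ) : ℝ) * Real.pi * (j:ℝ) * h = (j:ℝ) * Real.pi := by
        rw [hh]
        have hne : ((2*m+1 : ℕ) : ℝ) + 1 ≠ 0 := by positivity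
        field_simp
        push_cast
        ring
      rw [harg, Real.sin_nat_mul_pi]
      ring
    rw [Finset.sum_congr rfl hz]
    simp
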